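/- arXiv:2503.14699 — 3 statements merged into one kernel-verified Lean document; each statement's English description precedes it below -/
import Mathlib

section
/- Let $f(t)$, $h_1(t)$, $h_2(t)$ be non-negative continuous functions on $[t_0,\infty)$, let $a(t)$, $b_1(t)$, $b_2(t)$ be non-negative, non-decreasing continuous functions on $[t_0,\infty)$, and let $p>1$. Suppose that for all $t\geq t_0$, $f(t)\leq a(t)+b_1(t)\int_{t_0}^t h_1(s)f(s)\,ds+\big(b_2(t)\int_{t_0}^t h_2(s)f(s)^p\,ds\big)^{1/p}$. Then for any constant $C_6>0$ with $C_6^{-1}+(C_6 p)^{-1/p}<1$, one has $f(t)\leq C_6\,a(t)\exp\big(C_6\big(b_1(t)\int_{t_0}^t h_1(s)\,ds+b_2(t)\int_{t_0}^t h_2(s)\,ds\big)\big)$ for all $t\geq t_0$. -/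
open MeasureTheory Set

set_option maxHeartbeats 1000000

/-- Nonlinear Grönwall inequality (Lemma B.1): if
`f(t) ≤ a(t) + b₁(t)∫_{t₀}^t h₁ f + (b₂(t)∫_{t₀}^t h₂ f^p)^{1/p}`,
with all functions nonnegative continuous on `[t₀,∞)` and `a, b₁, b₂`
non-decreasing, then for every `C₆` with `C₆⁻¹ + (C₆ p)^{-1/p} < 1`,
`f(t) ≤ C₆ a(t) exp(C₆ (b₁(t)∫h₁ + b₂(t)∫h₂))`. -/
theorem stmt0 (t0 : ℝ) (f h1 h2 a b1 b2 : ℝ → ℝ) (p : ℝ) (hp : 1 < p)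
    (hf_cont : ContinuousOn f (Ici t0)) (hh1_cont : ContinuousOn h1 (Ici t0))
    (hh2_cont : ContinuousOn h2 (Ici t0)) (ha_cont : ContinuousOn a (Ici t0))
    (hb1_cont : ContinuousOn b1 (Ici t0)) (hb2_cont : ContinuousOn b2 (Ici t0))
    (hf_nonneg : ∀ t ∈ Ici t0, 0 ≤ f t) (hh1_nonneg : ∀ t ∈ Ici t0, 0 ≤ h1 t)
    (hh2_nonneg : ∀ t ∈ Ici t0, 0 ≤ h2 t) (ha_nonneg : ∀ t ∈ Ici t0, 0 ≤ a t)
    (hb1_nonneg : ∀ t ∈ Ici t0, 0 ≤ b1 t) (hb2_nonneg : ∀ t ∈ Ici t0, 0 ≤ b2 t)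
    (ha_mono : MonotoneOn a (Ici t0)) (hb1_mono : MonotoneOn b1 (Ici t0))
    (hb2_mono : MonotoneOn b2 (Ici t0))
    (hmain : ∀ t, t0 ≤ t →
      f t ≤ a t + b1 t * (∫ s in t0..t, h1 s * f s)
        + (b2 t * ∫ s in t0..t, h2 s * (f s) ^ p) ^ (1/p))
    (C6 : ℝ) (hC6 : 0 < C6) (hC6' : C6⁻¹ + (C6 * p) ^ (-(1/p)) < 1) :
    ∀ t, t0 ≤ t →
      f t ≤ C6 * a t *
        Real.exp (C6 * (b1 t * (∫ s in t0..t, h1 s) + b2 t * (∫ s in t0..t, h2 s))) := by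
  intro T hT
  have hp0 : (0:ℝ) < p := lt_trans one_pos hp
  have hC6p : (0:ℝ) < C6 * p := mul_pos hC6 hp0
  have hr_pos : (0:ℝ) < (C6 * p) ^ (-(1/p)) := Real.rpow_pos_of_pos hC6p _
  have hC6inv : C6⁻¹ < 1 := by linarith
  have hC6gt1 : 1 < C6 := by
    have h := mul_inv_cancel₀ (ne_of_gt hC6)
    nlinarith
  set E := Real.exp (C6 * (b1 T * (∫ s in t0..T, h1 s) + b2 T * (∫ s in t0..T, h2 s))) with hEdef
  have hEpos : 0 < E := Real.exp_pos _
  have main : ∀ ε : ℝ, 0 < ε → f T ≤ C6 * (a T + ε) * E := by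
    intro ε hε
    set A := a T + ε with hAdef
    have hA0 : 0 < A := add_pos_of_nonneg_of_pos (ha_nonneg T hT) hε
    have hsub : Icc t0 T ⊆ Ici t0 := Icc_subset_Ici_self
    set H1 : ℝ → ℝ := fun t => ∫ s in t0..t, h1 s with hH1def
    set H2 : ℝ → ℝ := fun t => ∫ s in t0..t, h2 s with hH2def
    set u : ℝ → ℝ := fun t => C6 * (b1 T * H1 t + b2 T * H2 t) with hudef
    set g : ℝ → ℝ := fun t => C6 * A * Real.exp (u t) with hgdef
    have hgpos : ∀ t, 0 < g t := fun t => by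
      have : 0 < Real.exp (u t) := Real.exp_pos _
      rw [hgdef]; positivity
    -- integrability generator
    have intgr : ∀ (F : ℝ → ℝ), ContinuousOn F (Ici t0) → ∀ x, t0 ≤ x →
        IntervalIntegrable F volume t0 x := by
      intro F hF x hx
      apply ContinuousOn.intervalIntegrable
      apply hF.mono
      rw [uIcc_of_le hx]
      exact Icc_subset_Ici_self
    -- continuity of primitives on [t0, T]
    have hH1c : ContinuousOn H1 (Icc t0 T) := by
      have hi : IntegrableOn h1 (uIcc t0 T) volume := by
        rw [uIcc_of_le hT]; exact (hh1_cont.mono hsub).integrableOn_Icc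
      have := intervalIntegral.continuousOn_primitive_interval hi
      rwa [uIcc_of_le hT] at this
    have hH2c : ContinuousOn H2 (Icc t0 T) := by
      have hi : IntegrableOn h2 (uIcc t0 T) volume := by
        rw [uIcc_of_le hT]; exact (hh2_cont.mono hsub).integrableOn_Icc
      have := intervalIntegral.continuousOn_primitive_interval hi
      rwa [uIcc_of_le hT] at this
    have hu_cont : ContinuousOn u (Icc t0 T) :=
      continuousOn_const.mul ((continuousOn_const.mul hH1c).add (continuousOn_const.mul hH2c))
    have hg_cont : ContinuousOn g (Icc t0 T) :=
      continuousOn_const.mul (Real.continuous_exp.comp_continuousOn hu_cont)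
    have hu0 : u t0 = 0 := by
      simp [hudef, hH1def, hH2def, intervalIntegral.integral_same]
    -- main claim: f < g on [t0, T]
    have claim : ∀ t ∈ Icc t0 T, f t < g t := by
      by_contra hcon
      push_neg at hcon
      obtain ⟨t2, ht2, hfg2⟩ := hcon
      set S : Set ℝ := {t | t ∈ Icc t0 T ∧ g t ≤ f t} with hSdef
      have hS_ne : S.Nonempty := ⟨t2, ht2, hfg2⟩
      have hS_bdd : BddBelow S := ⟨t0, fun x hx => hx.1.1⟩
      have hS_closed : IsClosed S := by
        have heq : S = Icc t0 T ∩ (fun t => f t - g t) ⁻¹' (Ici 0) := by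
          ext x
          simp only [hSdef, mem_setOf_eq, mem_inter_iff, mem_preimage, mem_Ici, sub_nonneg]
        rw [heq]
        exact ContinuousOn.preimage_isClosed_of_isClosed
          (((hf_cont.mono hsub)).sub hg_cont) isClosed_Icc isClosed_Ici
      set t1 := sInf S with ht1def
      have ht1S : t1 ∈ S := hS_closed.csInf_mem hS_ne hS_bdd
      obtain ⟨⟨ht01, ht1T⟩, hgf⟩ := ht1S
      have hsub1 : Icc t0 t1 ⊆ Ici t0 := Icc_subset_Ici_self
      have ht1Ici : t1 ∈ Ici t0 := ht01
      -- a.e. comparison f ≤ g on [t0, t1]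
      have hae : ∀ᵐ s ∂(volume.restrict (Icc t0 t1)), f s ≤ g s := by
        have h0 : ∀ᵐ s : ℝ ∂volume, s ≠ t1 := by
          have hmeas : volume ({t1} : Set ℝ) = 0 := measure_singleton t1
          rw [MeasureTheory.ae_iff]
          convert hmeas using 2
          ext x; simp
        have h1 := ae_restrict_of_ae (μ := volume) (s := Icc t0 t1) h0
        have h2 : ∀ᵐ s ∂(volume.restrict (Icc t0 t1)), s ∈ Icc t0 t1 :=
          ae_restrict_mem measurableSet_Icc
        filter_upwards [h1, h2] with s hs1 hs2
        have hslt : s < t1 := lt_of_le_of_ne hs2.2 hs1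
        have hsS : s ∉ S := notMem_of_lt_csInf hslt hS_bdd
        by_contra h
        exact hsS ⟨⟨hs2.1, le_trans hs2.2 ht1T⟩, le_of_lt (lt_of_not_ge h)⟩
      -- derivative of the primitives at interior points
      have hHderiv : ∀ (h : ℝ → ℝ), ContinuousOn h (Ici t0) → ∀ x ∈ Ioo t0 t1,
          HasDerivAt (fun t => ∫ s in t0..t, h s) (h x) x := by
        intro h hc x hx
        refine intervalIntegral.integral_hasDerivAt_right (intgr h hc x hx.1.le) ?_ ?_
        · exact (hc.mono Ioi_subset_Ici_self).stronglyMeasurableAtFilter isOpen_Ioi x hx.1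
        · exact (hc x hx.1.le).continuousAt (Ici_mem_nhds hx.1)
      have hu' : ∀ x ∈ Ioo t0 t1, HasDerivAt u (C6 * (b1 T * h1 x + b2 T * h2 x)) x := by
        intro x hx
        exact (((hHderiv h1 hh1_cont x hx).const_mul (b1 T)).add
          ((hHderiv h2 hh2_cont x hx).const_mul (b2 T))).const_mul C6
      have hu_cont1 : ContinuousOn u (Icc t0 t1) := hu_cont.mono (Icc_subset_Icc_right ht1T)
      have hexp_cont : ContinuousOn (fun s => Real.exp (u s)) (Icc t0 t1) :=
        Real.continuous_exp.comp_continuousOn hu_cont1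
      have hexp_cont' : ContinuousOn (fun s => Real.exp (p * u s)) (Icc t0 t1) :=
        Real.continuous_exp.comp_continuousOn (continuousOn_const.mul hu_cont1)
      have hw_cont : ContinuousOn (fun s => C6 * (b1 T * h1 s + b2 T * h2 s)) (Icc t0 t1) :=
        continuousOn_const.mul
          ((continuousOn_const.mul (hh1_cont.mono hsub1)).add
            (continuousOn_const.mul (hh2_cont.mono hsub1)))
      have hint1 : IntervalIntegrable
          (fun s => (C6 * (b1 T * h1 s + b2 T * h2 s)) * Real.exp (u s)) volume t0 t1 := by
        apply ContinuousOn.intervalIntegrable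
        rw [uIcc_of_le ht01]
        exact hw_cont.mul hexp_cont
      have hint2 : IntervalIntegrable
          (fun s => p * (C6 * (b1 T * h1 s + b2 T * h2 s)) * Real.exp (p * u s)) volume t0 t1 := by
        apply ContinuousOn.intervalIntegrable
        rw [uIcc_of_le ht01]
        exact ((continuousOn_const.mul hw_cont)).mul hexp_cont'
      -- FTC computations
      have FTC1 : ∫ s in t0..t1, (C6 * (b1 T * h1 s + b2 T * h2 s)) * Real.exp (u s)
          = Real.exp (u t1) - 1 := by
        have := intervalIntegral.integral_eq_sub_of_hasDerivAt_of_le ht01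
          (f := fun t => Real.exp (u t)) hexp_cont
          (fun x hx => by simpa [mul_comm] using (hu' x hx).exp) hint1
        simpa [hu0] using this
      have FTC2 : ∫ s in t0..t1, p * (C6 * (b1 T * h1 s + b2 T * h2 s)) * Real.exp (p * u s)
          = Real.exp (p * u t1) - 1 := by
        have := intervalIntegral.integral_eq_sub_of_hasDerivAt_of_le ht01
          (f := fun t => Real.exp (p * u t))
          (Real.continuous_exp.comp_continuousOn (continuousOn_const.mul hu_cont1))
          (fun x hx => by
            have := ((hu' x hx).const_mul p).exp
            simpa [mul_comm, mul_assoc, mul_left_comm] using this) hint2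
        simpa [hu0] using this
      -- first integral estimate
      have hI1 : b1 t1 * (∫ s in t0..t1, h1 s * f s) ≤ A * (Real.exp (u t1) - 1) := by
        rw [← FTC1, ← intervalIntegral.integral_const_mul, ← intervalIntegral.integral_const_mul]
        apply intervalIntegral.integral_mono_ae_restrict ht01
        · exact (intgr _ (continuousOn_const.mul (hh1_cont.mul hf_cont)) t1 ht01)
        · exact (hint1.const_mul A)
        · filter_upwards [hae, ae_restrict_mem (μ := volume) measurableSet_Icc]
            with s hfs hs
          have hsI : s ∈ Ici t0 := hsub1 hs
          have hb1le : b1 t1 ≤ b1 T := hb1_mono ht1Ici hT ht1T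
          have hb1n : 0 ≤ b1 t1 := hb1_nonneg t1 ht1Ici
          have hb1Tn : 0 ≤ b1 T := hb1_nonneg T hT
          have hh1n : 0 ≤ h1 s := hh1_nonneg s hsI
          have hfn : 0 ≤ f s := hf_nonneg s hsI
          have hb2Tn : 0 ≤ b2 T := hb2_nonneg T hT
          have hh2n : 0 ≤ h2 s := hh2_nonneg s hsI
          have he : (0:ℝ) < Real.exp (u s) := Real.exp_pos _
          have hgs : f s ≤ C6 * A * Real.exp (u s) := hfs
          have step1 : b1 t1 * (h1 s * f s) ≤ b1 T * (h1 s * (C6 * A * Real.exp (u s))) := by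
            apply mul_le_mul hb1le _ (mul_nonneg hh1n hfn) hb1Tn
            exact mul_le_mul le_rfl hgs hfn hh1n
          have step2 : b1 T * (h1 s * (C6 * A * Real.exp (u s)))
              ≤ A * (C6 * (b1 T * h1 s + b2 T * h2 s) * Real.exp (u s)) := by
            nlinarith [mul_nonneg (mul_nonneg (mul_nonneg hA0.le hC6.le)
              (mul_nonneg hb2Tn hh2n)) he.le]
          linarith
      -- second integral estimate
      have hgp : ∀ s, (C6 * A * Real.exp (u s)) ^ p
          = C6 ^ p * A ^ p * Real.exp (p * u s) := by
        intro s
        rw [Real.mul_rpow (by positivity) (Real.exp_pos _).le, Real.mul_rpow hC6.le hA0.le,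
          ← Real.exp_mul, mul_comm (u s) p]
      have hI2 : b2 t1 * (∫ s in t0..t1, h2 s * f s ^ p)
          ≤ (C6 ^ (p - 1) * A ^ p / p) * (Real.exp (p * u t1) - 1) := by
        rw [← FTC2, ← intervalIntegral.integral_const_mul, ← intervalIntegral.integral_const_mul]
        apply intervalIntegral.integral_mono_ae_restrict ht01
        · refine (intgr _ (continuousOn_const.mul (hh2_cont.mul
            (hf_cont.rpow_const fun x hx => Or.inr hp0.le))) t1 ht01)
        · exact (hint2.const_mul _)
        · filter_upwards [hae, ae_restrict_mem (μ := volume) measurableSet_Icc]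
            with s hfs hs
          have hsI : s ∈ Ici t0 := hsub1 hs
          have hb2le : b2 t1 ≤ b2 T := hb2_mono ht1Ici hT ht1T
          have hb2n : 0 ≤ b2 t1 := hb2_nonneg t1 ht1Ici
          have hb2Tn : 0 ≤ b2 T := hb2_nonneg T hT
          have hb1Tn : 0 ≤ b1 T := hb1_nonneg T hT
          have hh1n : 0 ≤ h1 s := hh1_nonneg s hsI
          have hh2n : 0 ≤ h2 s := hh2_nonneg s hsI
          have hfn : 0 ≤ f s := hf_nonneg s hsI
          have he : (0:ℝ) < Real.exp (p * u s) := Real.exp_pos _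
          have hQ : (0:ℝ) < C6 ^ p * A ^ p :=
            mul_pos (Real.rpow_pos_of_pos hC6 _) (Real.rpow_pos_of_pos hA0 _)
          have hfsp : f s ^ p ≤ C6 ^ p * A ^ p * Real.exp (p * u s) := by
            rw [← hgp s]
            exact Real.rpow_le_rpow hfn hfs hp0.le
          have hRHSeq : (C6 ^ (p - 1) * A ^ p / p)
              * (p * (C6 * (b1 T * h1 s + b2 T * h2 s)) * Real.exp (p * u s))
              = C6 ^ p * A ^ p * ((b1 T * h1 s + b2 T * h2 s) * Real.exp (p * u s)) := by
            rw [Real.rpow_sub_one hC6.ne' p]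
            field_simp
          rw [hRHSeq]
          have step1 : b2 t1 * (h2 s * f s ^ p)
              ≤ b2 T * (h2 s * (C6 ^ p * A ^ p * Real.exp (p * u s))) := by
            apply mul_le_mul hb2le _ (mul_nonneg hh2n (Real.rpow_nonneg hfn _)) hb2Tn
            exact mul_le_mul le_rfl hfsp (Real.rpow_nonneg hfn _) hh2n
          have step2 : b2 T * (h2 s * (C6 ^ p * A ^ p * Real.exp (p * u s)))
              ≤ C6 ^ p * A ^ p * ((b1 T * h1 s + b2 T * h2 s) * Real.exp (p * u s)) := by
            nlinarith [mul_nonneg (mul_nonneg hQ.le (mul_nonneg hb1Tn hh1n)) he.le]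
          linarith
      -- the rpow term
      have hI2n : 0 ≤ b2 t1 * (∫ s in t0..t1, h2 s * f s ^ p) := by
        apply mul_nonneg (hb2_nonneg t1 ht1Ici)
        apply intervalIntegral.integral_nonneg ht01
        intro s hs
        exact mul_nonneg (hh2_nonneg s (hsub1 hs)) (Real.rpow_nonneg (hf_nonneg s (hsub1 hs)) _)
      have hC6pA : (0:ℝ) < C6 ^ (p - 1) * A ^ p / p := by
        have := Real.rpow_pos_of_pos hC6 (p - 1)
        have := Real.rpow_pos_of_pos hA0 p
        positivity
      have hI2' : b2 t1 * (∫ s in t0..t1, h2 s * f s ^ p)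
          ≤ (C6 ^ (p - 1) * A ^ p / p) * Real.exp (p * u t1) := by
        have h1 : Real.exp (p * u t1) - 1 ≤ Real.exp (p * u t1) := by linarith
        calc b2 t1 * (∫ s in t0..t1, h2 s * f s ^ p)
            ≤ (C6 ^ (p - 1) * A ^ p / p) * (Real.exp (p * u t1) - 1) := hI2
          _ ≤ (C6 ^ (p - 1) * A ^ p / p) * Real.exp (p * u t1) :=
              mul_le_mul_of_nonneg_left h1 hC6pA.le
      have hkey : ((C6 ^ (p - 1) * A ^ p / p) * Real.exp (p * u t1)) ^ (1/p)
          = (C6 * p) ^ (-(1/p)) * (C6 * A * Real.exp (u t1)) := by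
        have e1 : C6 ^ (p - 1) * A ^ p / p * Real.exp (p * u t1)
            = (C6 * A * Real.exp (u t1)) ^ p * (C6 * p)⁻¹ := by
          rw [hgp t1, Real.rpow_sub_one hC6.ne' p]
          field_simp
        rw [e1, Real.mul_rpow (Real.rpow_nonneg (by positivity) _) (inv_nonneg.mpr hC6p.le),
          ← Real.rpow_mul (by positivity : (0:ℝ) ≤ C6 * A * Real.exp (u t1)),
          mul_one_div, div_self hp0.ne', Real.rpow_one,
          Real.inv_rpow hC6p.le, ← Real.rpow_neg hC6p.le, mul_comm]
      have htermC : (b2 t1 * (∫ s in t0..t1, h2 s * f s ^ p)) ^ (1/p)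
          ≤ (C6 * p) ^ (-(1/p)) * (C6 * A * Real.exp (u t1)) := by
        rw [← hkey]
        exact Real.rpow_le_rpow hI2n hI2' (by positivity)
      -- assemble
      have hmain1 := hmain t1 ht01
      have haTle : a t1 ≤ a T := ha_mono ht1Ici hT ht1T
      set eu := Real.exp (u t1) with heudef
      have heu : (0:ℝ) < eu := Real.exp_pos _
      set K := C6 * A * eu with hKdef
      have hK : (0:ℝ) < K := by rw [hKdef]; positivity
      have hmul : A * eu + (C6 * p) ^ (-(1/p)) * K < K := by
        have h1 : K * (C6⁻¹ + (C6 * p) ^ (-(1/p))) < K * 1 := by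
          exact mul_lt_mul_of_pos_left hC6' hK
        have h3 : K * C6⁻¹ = A * eu := by
          rw [hKdef]; field_simp
        nlinarith
      have hft1 : f t1 < g t1 := by
        have hgK : g t1 = K := rfl
        rw [hgK]
        have : f t1 ≤ a t1 + A * (eu - 1) + (C6 * p) ^ (-(1/p)) * K := by
          calc f t1 ≤ a t1 + b1 t1 * (∫ s in t0..t1, h1 s * f s)
                + (b2 t1 * ∫ s in t0..t1, h2 s * f s ^ p) ^ (1/p) := hmain1
            _ ≤ a t1 + A * (eu - 1) + (C6 * p) ^ (-(1/p)) * K := by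
                exact add_le_add (add_le_add le_rfl hI1) htermC
        have : f t1 ≤ a T + A * eu - A + (C6 * p) ^ (-(1/p)) * K := by linarith
        have hAgt : a T < A := by rw [hAdef]; linarith
        linarith
      exact absurd hgf (not_le.mpr hft1)
    have hfT := claim T ⟨hT, le_refl T⟩
    have : g T = C6 * A * E := rfl
    linarith [hfT, this ▸ hfT]
  -- conclude by letting ε → 0
  refine le_of_forall_pos_le_add fun δ hδ => ?_
  have h := main (δ / (C6 * E)) (by positivity)
  have heq : C6 * (a T + δ / (C6 * E)) * E = C6 * a T * E + δ := by
    field_simp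
  calc f T ≤ C6 * (a T + δ / (C6 * E)) * E := h
    _ = C6 * a T * E + δ := heq
end

section
/- Let $f(t)$, $g_1(t)$, $g_2(t)$ be positive continuous functions on $[t_0,\infty)$ and $a(t)$ a positive, non-decreasing continuous function there. Suppose that for all $t\geq t_0$, $f(t)\leq a(t)+\int_{t_0}^t\big(g_1(s)+(t-s)^{-1/2}g_2(s)\big)f(s)\,ds$. Then for any $p>2$ there exists a constant $C=C(p)$ such that for all $t\geq t_0$, $f(t)\leq C\,a(t)\exp\Big(C\Big(\int_{t_0}^t g_1(s)\,ds+\|s^{1/2}g_2(s)\|_{L^\infty([t_0,t])}^{p-2}\int_{t_0}^t g_2(s)^2\,ds\Big)\Big)$. -/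
open MeasureTheory Set intervalIntegral

namespace FracGronwallAux

/-- Young-inequality pointwise splitting of the singular kernel. -/
lemma young_step (p q α β θ K s t g : ℝ) (hp : 2 < p)
    (hqdef : q = p / (p-1)) (hadef : α = p / (2*(p-1))) (hbdef : β = 1 - α)
    (hθ : 0 < θ) (hs : 0 < s) (hst : s < t) (hg : 0 < g)
    (hK : s ^ ((1:ℝ)/2) * g ≤ K) :
    (t - s) ^ (-(1/2) : ℝ) * g ≤
      θ ^ (-q) * ((t-s) ^ (-α) * s ^ (-β)) + θ ^ p * K ^ (p-2) * g ^ 2 := by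
  have hp1 : (0:ℝ) < p - 1 := by linarith
  have hp0 : (0:ℝ) < p := by linarith
  have hq1 : 1 < q := by
    rw [hqdef, lt_div_iff₀ hp1]; linarith
  have hq0 : 0 < q := by linarith
  have hconj : q.HolderConjugate p := by
    refine Real.holderConjugate_iff.mpr ⟨hq1, ?_⟩
    rw [hqdef, inv_div]
    field_simp
    ring
  have hts : (0:ℝ) < t - s := by linarith
  have hK0 : 0 < K := lt_of_lt_of_le (by positivity) hK
  have hA0 : 0 < s ^ ((1:ℝ)/2) * g := by positivity
  have hZ10 : 0 < (t-s) ^ (-α) * s ^ (-β) := by positivity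
  have hZ20 : 0 < K ^ (p-2) * g ^ 2 := by positivity
  set A : ℝ := s ^ ((1:ℝ)/2) * g with hAdef
  set Z1 : ℝ := (t-s) ^ (-α) * s ^ (-β) with hZ1def
  set Z2 : ℝ := K ^ (p-2) * g ^ 2 with hZ2def
  set c : ℝ := (A / K) ^ ((p-2)/p) with hcdef
  have hc0 : 0 < c := Real.rpow_pos_of_pos (div_pos hA0 hK0) _
  have hc1 : c ≤ 1 := by
    rw [hcdef]
    apply Real.rpow_le_one (by positivity) _ (div_nonneg (by linarith) (by linarith))
    rw [div_le_one hK0]; exact hK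
  -- key identity
  have key : (t - s) ^ (-(1/2) : ℝ) * g = Z1 ^ (1/q) * c * Z2 ^ (1/p) := by
    have l1 : Real.log ((t - s) ^ (-(1/2) : ℝ) * g)
        = -(1/2) * Real.log (t-s) + Real.log g := by
      rw [Real.log_mul (by positivity) (ne_of_gt hg), Real.log_rpow hts]
    have l2 : Real.log (Z1 ^ (1/q) * c * Z2 ^ (1/p))
        = (1/q) * (-α * Real.log (t-s) + -β * Real.log s)
          + ((p-2)/p) * ((1/2 * Real.log s + Real.log g) - Real.log K)
          + (1/p) * ((p-2) * Real.log K + 2 * Real.log g) := by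
      rw [Real.log_mul (by positivity) (ne_of_gt (Real.rpow_pos_of_pos hZ20 _)),
        Real.log_mul (by positivity) (ne_of_gt hc0),
        Real.log_rpow hZ10, Real.log_rpow hZ20, hcdef,
        Real.log_rpow (div_pos hA0 hK0), Real.log_div (ne_of_gt hA0) (ne_of_gt hK0),
        hAdef, Real.log_mul (by positivity) (ne_of_gt hg),
        Real.log_rpow hs, hZ1def, hZ2def,
        Real.log_mul (by positivity) (ne_of_gt (by positivity)),
        Real.log_rpow hts, Real.log_rpow hs,
        Real.log_mul (by positivity) (ne_of_gt (by positivity)),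
        Real.log_rpow hK0, Real.log_pow]
      push_cast
      ring
    have hloge : Real.log ((t - s) ^ (-(1/2) : ℝ) * g)
        = Real.log (Z1 ^ (1/q) * c * Z2 ^ (1/p)) := by
      rw [l1, l2, hbdef, hadef, hqdef]
      field_simp
      ring
    have e1 : (t - s) ^ (-(1/2) : ℝ) * g
        = Real.exp (Real.log ((t - s) ^ (-(1/2) : ℝ) * g)) := by
      rw [Real.exp_log (by positivity)]
    have e2 : Z1 ^ (1/q) * c * Z2 ^ (1/p)
        = Real.exp (Real.log (Z1 ^ (1/q) * c * Z2 ^ (1/p))) := by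
      rw [Real.exp_log (by positivity)]
    rw [e1, e2, hloge]
  rw [key]
  have young : Z1 ^ (1/q) * Z2 ^ (1/p) ≤ θ ^ (-q) * Z1 + θ ^ p * Z2 := by
    have h1 : Z1 ^ (1/q) * Z2 ^ (1/p)
        = (θ⁻¹ * Z1 ^ (1/q)) * (θ * Z2 ^ (1/p)) := by
      field_simp
    have e1 : (θ⁻¹ * Z1 ^ (1/q)) ^ q = θ ^ (-q) * Z1 := by
      rw [Real.mul_rpow (by positivity) (by positivity), ← Real.rpow_mul hZ10.le,
        one_div_mul_cancel (ne_of_gt hq0), Real.rpow_one,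
        Real.inv_rpow hθ.le, ← Real.rpow_neg hθ.le]
    have e2 : (θ * Z2 ^ (1/p)) ^ p = θ ^ p * Z2 := by
      rw [Real.mul_rpow (by positivity) (by positivity), ← Real.rpow_mul hZ20.le,
        one_div_mul_cancel (ne_of_gt hp0), Real.rpow_one]
    rw [h1]
    calc (θ⁻¹ * Z1 ^ (1/q)) * (θ * Z2 ^ (1/p))
        ≤ (θ⁻¹ * Z1 ^ (1/q)) ^ q / q + (θ * Z2 ^ (1/p)) ^ p / p :=
          Real.young_inequality_of_nonneg (by positivity) (by positivity) hconj
      _ ≤ (θ⁻¹ * Z1 ^ (1/q)) ^ q + (θ * Z2 ^ (1/p)) ^ p := by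
          gcongr
          · exact div_le_self (by positivity) hq1.le
          · exact div_le_self (by positivity) (by linarith)
      _ = θ ^ (-q) * Z1 + θ ^ p * Z2 := by rw [e1, e2]
  calc Z1 ^ (1/q) * c * Z2 ^ (1/p) ≤ Z1 ^ (1/q) * 1 * Z2 ^ (1/p) := by
        apply mul_le_mul_of_nonneg_right _ (by positivity)
        exact mul_le_mul_of_nonneg_left hc1 (by positivity)
    _ = Z1 ^ (1/q) * Z2 ^ (1/p) := by ring
    _ ≤ θ ^ (-q) * Z1 + θ ^ p * Z2 := young
    _ = _ := by ring

lemma beta_integrable {α β : ℝ} (hα0 : 0 < α) (hα : α < 1) (hβ0 : 0 < β) (hβ : β < 1) :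
    IntervalIntegrable (fun σ : ℝ => σ ^ (-β) * (1 - σ) ^ (-α)) volume 0 1 := by
  have hα' : (-1:ℝ) < -α := by linarith
  have hβ' : (-1:ℝ) < -β := by linarith
  have m1 : IntervalIntegrable (fun σ : ℝ => σ ^ (-β)) volume 0 (1/2) :=
    intervalIntegrable_rpow' hβ'
  have m1' : IntervalIntegrable (fun σ : ℝ => σ ^ (-β)) volume (1/2) 1 :=
    intervalIntegrable_rpow' hβ'
  have m2 : IntervalIntegrable (fun σ : ℝ => (1-σ) ^ (-α)) volume 0 (1/2) := by
    have := ((intervalIntegrable_rpow' hα' (a := 1/2) (b := 1))).comp_sub_left 1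
    rw [show (1:ℝ)-(1:ℝ) = 0 by norm_num, show (1:ℝ)-1/2 = 1/2 by norm_num] at this
    exact this.symm
  have m2' : IntervalIntegrable (fun σ : ℝ => (1-σ) ^ (-α)) volume (1/2) 1 := by
    have := ((intervalIntegrable_rpow' hα' (a := 0) (b := 1/2))).comp_sub_left 1
    rw [show (1:ℝ)-(0:ℝ) = 1 by norm_num, show (1:ℝ)-1/2 = 1/2 by norm_num] at this
    exact this.symm
  have piece1 : IntervalIntegrable (fun σ : ℝ => σ ^ (-β) * (1 - σ) ^ (-α)) volume 0 (1/2) := by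
    apply IntervalIntegrable.mono_fun' (g := fun σ : ℝ => σ ^ (-β) * ((1:ℝ)/2) ^ (-α))
      (m1.mul_const _)
    · exact (m1.aestronglyMeasurable.mul m2.aestronglyMeasurable).mono_measure
        (by rw [uIoc_of_le (by norm_num : (0:ℝ) ≤ 1/2)])
    · rw [uIoc_of_le (by norm_num : (0:ℝ) ≤ 1/2)]
      filter_upwards [ae_restrict_mem measurableSet_Ioc] with σ hσ
      have h1 : 0 < σ := hσ.1
      have h2 : σ ≤ 1/2 := hσ.2
      have hb1 : (0:ℝ) ≤ σ ^ (-β) := Real.rpow_nonneg h1.le _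
      have hb2 : (0:ℝ) ≤ (1-σ) ^ (-α) := Real.rpow_nonneg (by linarith) _
      rw [Real.norm_eq_abs, abs_of_nonneg (mul_nonneg hb1 hb2)]
      apply mul_le_mul_of_nonneg_left _ hb1
      exact Real.rpow_le_rpow_of_nonpos (by norm_num) (by linarith) (by linarith)
  have piece2 : IntervalIntegrable (fun σ : ℝ => σ ^ (-β) * (1 - σ) ^ (-α)) volume (1/2) 1 := by
    apply IntervalIntegrable.mono_fun' (g := fun σ : ℝ => ((1:ℝ)/2) ^ (-β) * (1-σ) ^ (-α))
      (m2'.const_mul _)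
    · exact (m1'.aestronglyMeasurable.mul m2'.aestronglyMeasurable).mono_measure
        (by rw [uIoc_of_le (by norm_num : (1:ℝ)/2 ≤ 1)])
    · rw [uIoc_of_le (by norm_num : (1:ℝ)/2 ≤ 1)]
      filter_upwards [ae_restrict_mem measurableSet_Ioc] with σ hσ
      have h1 : 1/2 < σ := hσ.1
      have h2 : σ ≤ 1 := hσ.2
      have hb1 : (0:ℝ) ≤ σ ^ (-β) := Real.rpow_nonneg (by linarith) _
      have hb2 : (0:ℝ) ≤ (1-σ) ^ (-α) := Real.rpow_nonneg (by linarith) _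
      rw [Real.norm_eq_abs, abs_of_nonneg (mul_nonneg hb1 hb2)]
      apply mul_le_mul_of_nonneg_right _ hb2
      exact Real.rpow_le_rpow_of_nonpos (by norm_num) (by linarith) (by linarith)
  exact piece1.trans piece2

lemma kernel_eq {α β t0 t : ℝ} (hβ : β = 1 - α) (ht0 : 0 ≤ t0) (ht : t0 < t) :
    ∀ s ∈ Icc t0 t, (t - s) ^ (-α) * s ^ (-β)
      = t⁻¹ * ((s * t⁻¹) ^ (-β) * (1 - s * t⁻¹) ^ (-α)) := by
  intro s hs
  have htpos : 0 < t := lt_of_le_of_lt ht0 ht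
  have hs0 : 0 ≤ s := le_trans ht0 hs.1
  have hst : s ≤ t := hs.2
  have h1 : (1 : ℝ) - s * t⁻¹ = (t - s) * t⁻¹ := by field_simp
  have h2 : (t⁻¹ : ℝ) ^ (-β) * (t⁻¹) ^ (-α) = t := by
    rw [← Real.rpow_add (by positivity), (by rw [hβ]; ring : -β + -α = (-1:ℝ)),
      Real.rpow_neg_one, inv_inv]
  rw [h1, Real.mul_rpow hs0 (by positivity), Real.mul_rpow (sub_nonneg.2 hst) (by positivity)]
  calc (t - s) ^ (-α) * s ^ (-β)
      = t⁻¹ * t * ((t - s) ^ (-α) * s ^ (-β)) := by field_simp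
    _ = t⁻¹ * ((t⁻¹) ^ (-β) * (t⁻¹) ^ (-α)) * ((t - s) ^ (-α) * s ^ (-β)) := by rw [h2]
    _ = t⁻¹ * (s ^ (-β) * t⁻¹ ^ (-β) * ((t - s) ^ (-α) * t⁻¹ ^ (-α))) := by ring

lemma kernel_integrable {α β t0 t : ℝ} (hα0 : 1/2 < α) (hα : α < 1) (hβ : β = 1 - α)
    (ht0 : 0 ≤ t0) (ht : t0 < t) :
    IntervalIntegrable (fun s => (t - s) ^ (-α) * s ^ (-β)) volume t0 t := by
  have htpos : 0 < t := lt_of_le_of_lt ht0 ht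
  have hβ0 : 0 < β := by rw [hβ]; linarith
  have hβ1 : β < 1 := by rw [hβ]; linarith
  have hα0' : 0 < α := by linarith
  have hb : IntervalIntegrable (fun σ : ℝ => σ ^ (-β) * (1 - σ) ^ (-α)) volume (t0/t) 1 :=
    (beta_integrable hα0' hα hβ0 hβ1).mono_set
      (uIcc_subset_uIcc (by
        rw [uIcc_of_le (zero_le_one (α := ℝ))]
        exact ⟨by positivity, by rw [div_le_one htpos]; exact ht.le⟩)
        (by rw [uIcc_of_le (zero_le_one (α := ℝ))]; exact right_mem_Icc.2 zero_le_one) )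
  have hc := hb.comp_mul_right (c := t⁻¹)
  rw [show t0/t/t⁻¹ = t0 by field_simp, show (1:ℝ)/t⁻¹ = t by field_simp] at hc
  have hd := hc.const_mul t⁻¹
  apply IntervalIntegrable.mono_fun'
    (g := fun s => t⁻¹ * ((s * t⁻¹) ^ (-β) * (1 - s * t⁻¹) ^ (-α))) hd
  · have a1 : IntervalIntegrable (fun s : ℝ => s ^ (-β)) volume t0 t :=
      intervalIntegrable_rpow' (by linarith)
    have a2 : IntervalIntegrable (fun s : ℝ => (t - s) ^ (-α)) volume t0 t := by
      have := (intervalIntegrable_rpow' (r := -α) (by linarith)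
        (a := t - t) (b := t - t0)).comp_sub_left t
      rw [show t - (t - t) = t by ring, show t - (t - t0) = t0 by ring] at this
      exact this.symm
    exact (a2.aestronglyMeasurable.mul a1.aestronglyMeasurable).mono_measure
      (by rw [uIoc_of_le ht.le])
  · rw [uIoc_of_le ht.le]
    filter_upwards [ae_restrict_mem measurableSet_Ioc] with s hs
    rw [Real.norm_eq_abs, abs_of_nonneg (mul_nonneg
      (Real.rpow_nonneg (by linarith [hs.2]) _)
      (Real.rpow_nonneg (by linarith [lt_of_le_of_lt ht0 hs.1]) _))]
    rw [kernel_eq hβ ht0 ht s (Ioc_subset_Icc_self hs)]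

lemma kernel_bound {α β t0 t : ℝ} (hα0 : 1/2 < α) (hα : α < 1) (hβ : β = 1 - α)
    (ht0 : 0 ≤ t0) (ht : t0 < t) :
    ∫ s in t0..t, (t - s) ^ (-α) * s ^ (-β)
      ≤ ∫ σ in (0:ℝ)..1, σ ^ (-β) * (1 - σ) ^ (-α) := by
  have htpos : 0 < t := lt_of_le_of_lt ht0 ht
  have hβ0 : 0 < β := by rw [hβ]; linarith
  have hβ1 : β < 1 := by rw [hβ]; linarith
  have hα0' : 0 < α := by linarith
  have hbeta := beta_integrable hα0' hα hβ0 hβ1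
  have hdiv : t0 / t ∈ Icc (0:ℝ) 1 := by
    constructor
    · positivity
    · rw [div_le_one htpos]; exact ht.le
  have step1 : ∫ s in t0..t, (t - s) ^ (-α) * s ^ (-β)
      = ∫ s in t0..t, t⁻¹ * ((s * t⁻¹) ^ (-β) * (1 - s * t⁻¹) ^ (-α)) := by
    apply integral_congr
    intro s hs
    rw [uIcc_of_le ht.le] at hs
    exact kernel_eq hβ ht0 ht s hs
  have step2 : ∫ s in t0..t, t⁻¹ * ((s * t⁻¹) ^ (-β) * (1 - s * t⁻¹) ^ (-α))
      = t⁻¹ * ∫ s in t0..t, ((s * t⁻¹) ^ (-β) * (1 - s * t⁻¹) ^ (-α)) :=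
    integral_const_mul _ _
  have step3 : (∫ s in t0..t, ((s * t⁻¹) ^ (-β) * (1 - s * t⁻¹) ^ (-α)))
      = t • ∫ σ in (t0/t)..1, σ ^ (-β) * (1 - σ) ^ (-α) := by
    have := integral_comp_mul_right (a := t0) (b := t)
      (fun σ : ℝ => σ ^ (-β) * (1 - σ) ^ (-α)) (inv_ne_zero (ne_of_gt htpos))
    rw [this, show t0 * t⁻¹ = t0 / t by ring, show t * t⁻¹ = 1 by field_simp, inv_inv]
  have step4 : ∫ σ in (t0/t)..1, σ ^ (-β) * (1 - σ) ^ (-α)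
      ≤ ∫ σ in (0:ℝ)..1, σ ^ (-β) * (1 - σ) ^ (-α) := by
    have i1 : IntervalIntegrable (fun σ : ℝ => σ ^ (-β) * (1 - σ) ^ (-α)) volume 0 (t0/t) :=
      hbeta.mono_set (uIcc_subset_uIcc left_mem_uIcc
        (by rw [uIcc_of_le (zero_le_one (α:=ℝ))]; exact hdiv))
    have i2 : IntervalIntegrable (fun σ : ℝ => σ ^ (-β) * (1 - σ) ^ (-α)) volume (t0/t) 1 :=
      hbeta.mono_set (uIcc_subset_uIcc
        (by rw [uIcc_of_le (zero_le_one (α:=ℝ))]; exact hdiv) right_mem_uIcc)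
    have hadd := integral_add_adjacent_intervals i1 i2
    have hpos : 0 ≤ ∫ σ in (0:ℝ)..(t0/t), σ ^ (-β) * (1 - σ) ^ (-α) := by
      apply integral_nonneg hdiv.1
      intro σ hσ
      exact mul_nonneg (Real.rpow_nonneg hσ.1 _)
        (Real.rpow_nonneg (by linarith [hσ.2, hdiv.2] : (0:ℝ) ≤ 1 - σ) _)
    linarith [hadd]
  calc ∫ s in t0..t, (t - s) ^ (-α) * s ^ (-β)
      = t⁻¹ * (t • ∫ σ in (t0/t)..1, σ ^ (-β) * (1 - σ) ^ (-α)) := by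
        rw [step1, step2, step3]
    _ = ∫ σ in (t0/t)..1, σ ^ (-β) * (1 - σ) ^ (-α) := by
        rw [smul_eq_mul]; field_simp
    _ ≤ _ := step4

end FracGronwallAux

open FracGronwallAux

/-- Fractional Grönwall inequality (Lemma B.3): if
`f(t) ≤ a(t) + ∫_{t₀}^t (g₁(s) + (t-s)^{-1/2} g₂(s)) f(s) ds`
with all functions positive continuous on `[t₀,∞)` and `a` non-decreasing,
then for any `p > 2` there is `C = C(p)` with
`f(t) ≤ C a(t) exp(C (∫ g₁ + ‖s^{1/2} g₂‖_{L^∞([t₀,t])}^{p-2} ∫ g₂²))`. -/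
theorem stmt2 (t0 : ℝ) (ht0 : 0 ≤ t0) (f g1 g2 a : ℝ → ℝ) (p : ℝ) (hp : 2 < p)
    (hf_cont : ContinuousOn f (Ici t0)) (hg1_cont : ContinuousOn g1 (Ici t0))
    (hg2_cont : ContinuousOn g2 (Ici t0)) (ha_cont : ContinuousOn a (Ici t0))
    (hf_pos : ∀ t ∈ Ici t0, 0 < f t) (hg1_pos : ∀ t ∈ Ici t0, 0 < g1 t)
    (hg2_pos : ∀ t ∈ Ici t0, 0 < g2 t) (ha_pos : ∀ t ∈ Ici t0, 0 < a t)
    (ha_mono : MonotoneOn a (Ici t0))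
    (hmain : ∀ t, t0 ≤ t →
      f t ≤ a t + ∫ s in t0..t, (g1 s + (t - s) ^ (-(1/2) : ℝ) * g2 s) * f s) :
    ∃ C : ℝ, 0 < C ∧ ∀ t, t0 ≤ t →
      f t ≤ C * a t * Real.exp (C * ((∫ s in t0..t, g1 s)
        + (sSup ((fun s => s ^ ((1:ℝ)/2) * g2 s) '' Icc t0 t)) ^ (p - 2)
          * ∫ s in t0..t, (g2 s) ^ 2)) := by
  have hp0 : (0:ℝ) < p := by linarith
  have hp1 : (0:ℝ) < p - 1 := by linarith
  set q : ℝ := p / (p-1) with hqdef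
  set α : ℝ := p / (2*(p-1)) with hadef
  set β : ℝ := 1 - α with hbdef
  have hq1 : 1 < q := by rw [hqdef, lt_div_iff₀ hp1]; linarith
  have hα0 : 1/2 < α := by rw [hadef, lt_div_iff₀ (by linarith : (0:ℝ) < 2*(p-1))]; linarith
  have hα1 : α < 1 := by rw [hadef, div_lt_one (by linarith : (0:ℝ) < 2*(p-1))]; linarith
  set B : ℝ := ∫ σ in (0:ℝ)..1, σ ^ (-β) * (1-σ) ^ (-α) with hBdef
  set B' : ℝ := max B 1 with hB'def
  have hB'1 : (1:ℝ) ≤ B' := le_max_right _ _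
  have hB'0 : (0:ℝ) < B' := lt_of_lt_of_le one_pos hB'1
  set θ : ℝ := (2*B') ^ ((p-1)/p) with hθdef
  have hθ0 : 0 < θ := Real.rpow_pos_of_pos (by linarith) _
  have hθq : θ ^ (-q) = (2*B')⁻¹ := by
    rw [hθdef, ← Real.rpow_mul (by linarith : (0:ℝ) ≤ 2*B'),
      (by rw [hqdef]; field_simp : (p-1)/p * (-q) = (-1:ℝ)), Real.rpow_neg_one]
  have hhalf : θ ^ (-q) * B' ≤ 1/2 := by
    rw [hθq]; rw [inv_mul_le_iff₀ (by linarith)]; linarith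
  have hθqpos : 0 < θ ^ (-q) := Real.rpow_pos_of_pos hθ0 _
  set C : ℝ := max 2 (2 * θ ^ p) with hCdef
  have hC2 : (2:ℝ) ≤ C := le_max_left _ _
  have hCθ : 2 * θ ^ p ≤ C := le_max_right _ _
  have hθp : 0 < θ ^ p := Real.rpow_pos_of_pos hθ0 _
  refine ⟨C, by linarith, ?_⟩
  intro t1 ht1
  rcases eq_or_lt_of_le ht1 with heq | hlt
  · -- degenerate case t1 = t0
    rw [← heq]
    simp only [intervalIntegral.integral_same, mul_zero, add_zero, mul_zero, Real.exp_zero]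
    have h1 : f t0 ≤ a t0 := by
      have := hmain t0 (le_refl t0)
      simpa using this
    have h2 : 0 < a t0 := ha_pos t0 (le_refl t0)
    nlinarith
  · -- main case
    have ht1pos : 0 < t1 := lt_of_le_of_lt ht0 hlt
    set Kf : ℝ → ℝ := fun s => s ^ ((1:ℝ)/2) * g2 s with hKfdef
    set K : ℝ := sSup (Kf '' Icc t0 t1) with hKdef
    have hhalfcont : Continuous fun s : ℝ => s ^ ((1:ℝ)/2) := by
      apply continuous_iff_continuousAt.2
      intro x
      exact Real.continuousAt_rpow_const x _ (Or.inr (by norm_num))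
    have hKf_cont : ContinuousOn Kf (Icc t0 t1) := by
      simp only [hKfdef]
      exact (hhalfcont.continuousOn).mul (hg2_cont.mono (fun x hx => hx.1))
    have hKbdd : BddAbove (Kf '' Icc t0 t1) :=
      (isCompact_Icc.image_of_continuousOn hKf_cont).bddAbove
    have hKmem : ∀ s ∈ Icc t0 t1, s ^ ((1:ℝ)/2) * g2 s ≤ K := fun s hs =>
      le_csSup hKbdd (mem_image_of_mem _ hs)
    have hK0 : 0 < K := by
      refine lt_of_lt_of_le ?_ (hKmem t1 ⟨ht1, le_refl t1⟩)
      exact mul_pos (Real.rpow_pos_of_pos ht1pos _) (hg2_pos t1 ht1)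
    have hKp2 : 0 < K ^ (p-2) := Real.rpow_pos_of_pos hK0 _
    set u : ℝ → ℝ := fun s => f s / a s with hudef
    have hu_cont : ContinuousOn u (Ici t0) :=
      hf_cont.div ha_cont (fun s hs => ne_of_gt (ha_pos s hs))
    have hu_pos : ∀ s ∈ Ici t0, 0 < u s := fun s hs => div_pos (hf_pos s hs) (ha_pos s hs)
    set G : ℝ → ℝ := fun s => g1 s + θ ^ p * (K ^ (p-2) * g2 s ^ 2) with hGdef
    have hG_cont : ContinuousOn G (Ici t0) := by
      simp only [hGdef]
      exact hg1_cont.add (continuousOn_const.mul (continuousOn_const.mul (hg2_cont.pow 2)))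
    have hG_pos : ∀ s ∈ Ici t0, 0 < G s := by
      intro s hs
      simp only [hGdef]
      exact add_pos (hg1_pos s hs) (mul_pos hθp (mul_pos hKp2 (pow_pos (hg2_pos s hs) 2)))
    set M : ℝ → ℝ := fun τ => sSup (u '' Icc t0 τ) with hMdef
    have hMbdd : ∀ τ, τ ≤ t1 → BddAbove (u '' Icc t0 τ) := fun τ hτ =>
      (isCompact_Icc.image_of_continuousOn (hu_cont.mono (fun x hx => hx.1))).bddAbove
    have hMub : ∀ τ, t0 ≤ τ → τ ≤ t1 → ∀ s ∈ Icc t0 τ, u s ≤ M τ := by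
      intro τ h1 h2 s hs
      simp only [hMdef]
      exact le_csSup (hMbdd τ h2) (mem_image_of_mem _ hs)
    have hM0 : ∀ τ, t0 ≤ τ → τ ≤ t1 → 0 ≤ M τ := fun τ h1 h2 =>
      le_trans (hu_pos t0 Set.self_mem_Ici).le (hMub τ h1 h2 t0 ⟨le_refl _, h1⟩)
    have hM_mono : ∀ τ τ', t0 ≤ τ → τ ≤ τ' → τ' ≤ t1 → M τ ≤ M τ' := by
      intro τ τ' h1 h2 h3
      simp only [hMdef]
      exact csSup_le_csSup (hMbdd τ' h3) (Set.Nonempty.image u (⟨t0, ⟨le_refl t0, h1⟩⟩ : (Icc t0 τ).Nonempty))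
        (image_mono (Icc_subset_Icc_right h2))
    have iGu' : ∀ τ, t0 ≤ τ → IntervalIntegrable (fun s => G s * u s) volume t0 τ := by
      intro τ hτ
      apply ContinuousOn.intervalIntegrable
      rw [uIcc_of_le hτ]
      exact (hG_cont.mono (fun x hx => hx.1)).mul (hu_cont.mono (fun x hx => hx.1))
    -- ### core estimate
    have hcore : ∀ τ, t0 ≤ τ → τ ≤ t1 →
        u τ ≤ 1 + (∫ s in t0..τ, G s * u s) + (1/2) * M τ := by
      intro τ hτ0 hτ1
      have hMτ0 : 0 ≤ M τ := hM0 τ hτ0 hτ1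
      rcases eq_or_lt_of_le hτ0 with heq2 | hlt2
      · rw [← heq2]
        simp only [intervalIntegral.integral_same]
        have h1 : f t0 ≤ a t0 := by simpa using hmain t0 (le_refl t0)
        have h2 : u t0 ≤ 1 := by
          simp only [hudef]
          exact div_le_one_of_le₀ h1 (ha_pos t0 Set.self_mem_Ici).le
        rw [← heq2] at hMτ0
        linarith
      · have hτIci : τ ∈ Ici t0 := hτ0
        have haτ : 0 < a τ := ha_pos τ hτIci
        set W : ℝ → ℝ := fun s => (τ - s) ^ (-α) * s ^ (-β) with hWdef
        have iW : IntervalIntegrable W volume t0 τ := by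
          simp only [hWdef]; exact kernel_integrable hα0 hα1 hbdef ht0 hlt2
        have hWnn : ∀ s ∈ Icc t0 τ, 0 ≤ W s := by
          intro s hs
          simp only [hWdef]
          exact mul_nonneg (Real.rpow_nonneg (by linarith [hs.2]) _)
            (Real.rpow_nonneg (le_trans ht0 hs.1) _)
        obtain ⟨D, hD⟩ := (isCompact_Icc (a := t0) (b := τ)).exists_bound_of_continuousOn
          (hu_cont.mono (fun x hx => hx.1))
        have huaesm : AEStronglyMeasurable u (volume.restrict (Ioc t0 τ)) :=
          (hu_cont.mono (fun x (hx : x ∈ Ioc t0 τ) => le_of_lt hx.1)).aestronglyMeasurable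
            measurableSet_Ioc
        have iWu : IntervalIntegrable (fun s => W s * u s) volume t0 τ := by
          apply IntervalIntegrable.mono_fun' (g := fun s => W s * D) (iW.mul_const D)
          · exact (iW.aestronglyMeasurable.mul huaesm).mono_measure
              (by rw [uIoc_of_le hlt2.le])
          · rw [uIoc_of_le hlt2.le]
            filter_upwards [ae_restrict_mem measurableSet_Ioc] with s hs
            have hW := hWnn s (Ioc_subset_Icc_self hs)
            have hDs := hD s (Ioc_subset_Icc_self hs)
            rw [Real.norm_eq_abs] at hDs ⊢
            rw [abs_mul, abs_of_nonneg hW]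
            exact mul_le_mul_of_nonneg_left hDs hW
        have i2 : IntervalIntegrable (fun s : ℝ => (τ - s) ^ (-(1/2):ℝ)) volume t0 τ := by
          have := (intervalIntegrable_rpow' (r := -(1/2)) (by norm_num)
            (a := τ - τ) (b := τ - t0)).comp_sub_left τ
          rw [show τ - (τ - τ) = τ by ring, show τ - (τ - t0) = t0 by ring] at this
          exact this.symm
        obtain ⟨D2, hD2⟩ := (isCompact_Icc (a := t0) (b := τ)).exists_bound_of_continuousOn
          ((hg2_cont.mono (fun x hx => hx.1)).mul (hf_cont.mono (fun x hx => hx.1)))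
        have i3 : IntervalIntegrable (fun s => (τ - s) ^ (-(1/2):ℝ) * (g2 s * f s))
            volume t0 τ := by
          apply IntervalIntegrable.mono_fun'
            (g := fun s => (τ - s) ^ (-(1/2):ℝ) * D2) (i2.mul_const D2)
          · refine (i2.aestronglyMeasurable.mul ?_).mono_measure (by rw [uIoc_of_le hlt2.le])
            exact ((hg2_cont.mono (fun x (hx : x ∈ Ioc t0 τ) => le_of_lt hx.1)).mul
              (hf_cont.mono (fun x (hx : x ∈ Ioc t0 τ) => le_of_lt hx.1))).aestronglyMeasurable
              measurableSet_Ioc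
          · rw [uIoc_of_le hlt2.le]
            filter_upwards [ae_restrict_mem measurableSet_Ioc] with s hs
            have hW : (0:ℝ) ≤ (τ - s) ^ (-(1/2):ℝ) :=
              Real.rpow_nonneg (by linarith [hs.2]) _
            have hDs := hD2 s (Ioc_subset_Icc_self hs)
            rw [Real.norm_eq_abs] at hDs ⊢
            rw [abs_mul, abs_of_nonneg hW]
            exact mul_le_mul_of_nonneg_left hDs hW
        have i1 : IntervalIntegrable (fun s => g1 s * f s) volume t0 τ := by
          apply ContinuousOn.intervalIntegrable
          rw [uIcc_of_le hlt2.le]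
          exact (hg1_cont.mono (fun x hx => hx.1)).mul (hf_cont.mono (fun x hx => hx.1))
        have iK : IntervalIntegrable
            (fun s => (g1 s + (τ - s) ^ (-(1/2):ℝ) * g2 s) * f s) volume t0 τ := by
          have e : (fun s => (g1 s + (τ - s) ^ (-(1/2):ℝ) * g2 s) * f s)
              = fun s => g1 s * f s + (τ - s) ^ (-(1/2):ℝ) * (g2 s * f s) := by
            funext s; ring
          rw [e]; exact i1.add i3
        have iGu : IntervalIntegrable (fun s => G s * u s) volume t0 τ := iGu' τ hτ0
        have iRHS : IntervalIntegrable
            (fun s => a τ * (G s * u s) + (a τ * θ ^ (-q)) * (W s * u s)) volume t0 τ :=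
          (iGu.const_mul _).add (iWu.const_mul _)
        have hmono1 : (∫ s in t0..τ, (g1 s + (τ - s) ^ (-(1/2):ℝ) * g2 s) * f s)
            ≤ ∫ s in t0..τ, (a τ * (G s * u s) + (a τ * θ ^ (-q)) * (W s * u s)) := by
          apply integral_mono_ae_restrict hlt2.le iK iRHS
          have hnull : (volume : Measure ℝ) ({t0, τ} : Set ℝ) = 0 :=
            (Set.toFinite _).measure_zero _
          have h0 : ∀ᵐ s ∂(volume.restrict (Icc t0 τ)), s ∉ ({t0, τ} : Set ℝ) :=
            Filter.Eventually.filter_mono (ae_mono Measure.restrict_le_self)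
              (measure_eq_zero_iff_ae_notMem.mp hnull)
          filter_upwards [ae_restrict_mem measurableSet_Icc, h0] with s hs hs2
          have hne1 : s ≠ t0 := fun h => hs2 (by rw [h]; exact mem_insert _ _)
          have hne2 : s ≠ τ := fun h => hs2 (by rw [h]; exact mem_insert_of_mem _ rfl)
          have hs1 : t0 < s := lt_of_le_of_ne hs.1 (Ne.symm hne1)
          have hsτ : s < τ := lt_of_le_of_ne hs.2 hne2
          have hsIci : s ∈ Ici t0 := hs.1
          have hspos : 0 < s := lt_of_le_of_lt ht0 hs1
          have hys := young_step p q α β θ K s τ (g2 s) hp hqdef hadef hbdef hθ0 hspos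
            hsτ (hg2_pos s hsIci) (hKmem s ⟨hs.1, le_trans hs.2 hτ1⟩)
          have hfs : 0 < f s := hf_pos s hsIci
          have hGW : g1 s + (τ - s) ^ (-(1/2):ℝ) * g2 s ≤ G s + θ ^ (-q) * W s := by
            have e : G s + θ ^ (-q) * W s
                = g1 s + (θ ^ (-q) * ((τ-s) ^ (-α) * s ^ (-β))
                    + θ ^ p * K ^ (p-2) * g2 s ^ 2) := by
              simp only [hGdef, hWdef]; ring
            rw [e]
            linarith [hys]
          have hGWnn : 0 ≤ G s + θ ^ (-q) * W s :=
            add_nonneg (hG_pos s hsIci).le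
              (mul_nonneg hθqpos.le (hWnn s ⟨hs.1, hs.2⟩))
          have hfu : f s = a s * u s := by
            simp only [hudef]
            rw [mul_comm]
            exact (div_mul_cancel₀ (f s) (ne_of_gt (ha_pos s hsIci))).symm
          have hfau : f s ≤ a τ * u s := by
            rw [hfu]
            exact mul_le_mul_of_nonneg_right (ha_mono hsIci hτIci hsτ.le)
              (hu_pos s hsIci).le
          calc (g1 s + (τ - s) ^ (-(1/2):ℝ) * g2 s) * f s
              ≤ (G s + θ ^ (-q) * W s) * f s :=
                mul_le_mul_of_nonneg_right hGW hfs.le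
            _ ≤ (G s + θ ^ (-q) * W s) * (a τ * u s) :=
                mul_le_mul_of_nonneg_left hfau hGWnn
            _ = a τ * (G s * u s) + (a τ * θ ^ (-q)) * (W s * u s) := by ring
        have hsplit : (∫ s in t0..τ, (a τ * (G s * u s) + (a τ * θ ^ (-q)) * (W s * u s)))
            = a τ * (∫ s in t0..τ, G s * u s)
              + (a τ * θ ^ (-q)) * (∫ s in t0..τ, W s * u s) := by
          rw [integral_add (iGu.const_mul _) (iWu.const_mul _),
            intervalIntegral.integral_const_mul, intervalIntegral.integral_const_mul]
        have hWuB : (∫ s in t0..τ, W s * u s) ≤ B' * M τ := by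
          have h1 : (∫ s in t0..τ, W s * u s) ≤ ∫ s in t0..τ, W s * M τ := by
            apply integral_mono_on hlt2.le iWu (iW.mul_const _)
            intro s hs
            exact mul_le_mul_of_nonneg_left (hMub τ hτ0 hτ1 s hs) (hWnn s hs)
          have h2 : (∫ s in t0..τ, W s * M τ) = (∫ s in t0..τ, W s) * M τ :=
            integral_mul_const _ _
          have h3 : (∫ s in t0..τ, W s) ≤ B := by
            have hkb := kernel_bound hα0 hα1 hbdef ht0 hlt2
            simp only [hWdef, hBdef]
            exact hkb
          calc (∫ s in t0..τ, W s * u s) ≤ (∫ s in t0..τ, W s) * M τ := by rw [← h2]; exact h1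
            _ ≤ B * M τ := mul_le_mul_of_nonneg_right h3 hMτ0
            _ ≤ B' * M τ := mul_le_mul_of_nonneg_right (le_max_left _ _) hMτ0
        have key2 : (a τ * θ ^ (-q)) * (∫ s in t0..τ, W s * u s)
            ≤ a τ * ((1/2) * M τ) := by
          have h4 : θ ^ (-q) * (B' * M τ) ≤ (1/2) * M τ := by
            have h5 : (θ ^ (-q) * B') * M τ ≤ (1/2) * M τ :=
              mul_le_mul_of_nonneg_right hhalf hMτ0
            calc θ ^ (-q) * (B' * M τ) = (θ ^ (-q) * B') * M τ := by ring
              _ ≤ (1/2) * M τ := h5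
          calc (a τ * θ ^ (-q)) * (∫ s in t0..τ, W s * u s)
              ≤ (a τ * θ ^ (-q)) * (B' * M τ) :=
                mul_le_mul_of_nonneg_left hWuB (by positivity)
            _ = a τ * (θ ^ (-q) * (B' * M τ)) := by ring
            _ ≤ a τ * ((1/2) * M τ) := mul_le_mul_of_nonneg_left h4 haτ.le
        have hfτ : f τ ≤ a τ + (a τ * (∫ s in t0..τ, G s * u s)
            + (a τ * θ ^ (-q)) * (∫ s in t0..τ, W s * u s)) := by
          have := hmain τ hτ0
          rw [hsplit] at hmono1
          linarith
        have hgoal : f τ ≤ (1 + (∫ s in t0..τ, G s * u s) + (1/2) * M τ) * a τ := by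
          have e : (1 + (∫ s in t0..τ, G s * u s) + (1/2) * M τ) * a τ
              = a τ + (a τ * (∫ s in t0..τ, G s * u s) + a τ * ((1/2) * M τ)) := by ring
          rw [e]
          linarith [key2]
        have : u τ = f τ / a τ := by simp only [hudef]
        rw [this, div_le_iff₀ haτ]
        exact hgoal
    -- ### sup bound: M ≤ ψ and u ≤ ψ
    set ψ : ℝ → ℝ := fun τ => 2 + ∫ s in t0..τ, 2 * (G s * u s) with hψdef
    have hGu_nn : ∀ τ, t0 ≤ τ → (0:ℝ→ℝ) ≤ᵐ[volume.restrict (Ioc t0 τ)]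
        fun s => G s * u s := by
      intro τ hτ
      filter_upwards [ae_restrict_mem measurableSet_Ioc] with s hs
      exact mul_nonneg (hG_pos s hs.1.le).le (hu_pos s hs.1.le).le
    have hMψ : ∀ τ, t0 ≤ τ → τ ≤ t1 → M τ ≤ ψ τ := by
      intro τ hτ0 hτ1
      have hIψ : (∫ s in t0..τ, 2*(G s * u s)) = 2 * ∫ s in t0..τ, G s * u s :=
        integral_const_mul _ _
      have hub : M τ ≤ 1 + (∫ s in t0..τ, G s * u s) + (1/2) * M τ := by
        simp only [hMdef]
        apply csSup_le (Set.Nonempty.image u (⟨t0, ⟨le_refl t0, hτ0⟩⟩ : (Icc t0 τ).Nonempty))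
        rintro x ⟨σ, hσ, rfl⟩
        have h1 := hcore σ hσ.1 (le_trans hσ.2 hτ1)
        have h2 : (∫ s in t0..σ, G s * u s) ≤ ∫ s in t0..τ, G s * u s :=
          integral_mono_interval (le_refl t0) hσ.1 hσ.2 (hGu_nn τ hτ0) (iGu' τ hτ0)
        have h3 : M σ ≤ M τ := hM_mono σ τ hσ.1 hσ.2 hτ1
        have h4 : u σ ≤ 1 + (∫ s in t0..τ, G s * u s) + (1/2) * M τ := by linarith
        simpa only [hMdef] using h4
      have hMτ0 := hM0 τ hτ0 hτ1
      simp only [hψdef]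
      rw [hIψ]
      linarith
    have huψ : ∀ τ, t0 ≤ τ → τ ≤ t1 → u τ ≤ ψ τ := fun τ h1 h2 =>
      le_trans (hMub τ h1 h2 τ ⟨h1, le_refl _⟩) (hMψ τ h1 h2)
    -- ### Gronwall via derivative
    set IT : ℝ → ℝ := fun τ => ∫ s in t0..τ, 2 * G s with hITdef
    set Φ : ℝ → ℝ := fun τ => ψ τ * Real.exp (-(IT τ)) with hΦdef
    have h2Gu_cont : ContinuousOn (fun s => 2 * (G s * u s)) (Ici t0) :=
      continuousOn_const.mul (hG_cont.mul hu_cont)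
    have h2G_cont : ContinuousOn (fun s => 2 * G s) (Ici t0) :=
      continuousOn_const.mul hG_cont
    have hint1 : ∀ τ, t0 ≤ τ → IntervalIntegrable (fun s => 2 * (G s * u s)) volume t0 τ := by
      intro τ hτ
      apply ContinuousOn.intervalIntegrable
      rw [uIcc_of_le hτ]
      exact h2Gu_cont.mono (fun x hx => hx.1)
    have hint2 : ∀ τ, t0 ≤ τ → IntervalIntegrable (fun s => 2 * G s) volume t0 τ := by
      intro τ hτ
      apply ContinuousOn.intervalIntegrable
      rw [uIcc_of_le hτ]
      exact h2G_cont.mono (fun x hx => hx.1)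
    have hψcont : ContinuousOn ψ (Icc t0 t1) := by
      simp only [hψdef]
      apply continuousOn_const.add
      have := intervalIntegral.continuousOn_primitive_interval
        (a := t0) (b := t1) (μ := volume) (f := fun s => 2 * (G s * u s)) ?_
      · rwa [uIcc_of_le hlt.le] at this
      · rw [uIcc_of_le hlt.le]
        exact (h2Gu_cont.mono (fun x hx => hx.1)).integrableOn_Icc
    have hITcont : ContinuousOn IT (Icc t0 t1) := by
      simp only [hITdef]
      have := intervalIntegral.continuousOn_primitive_interval
        (a := t0) (b := t1) (μ := volume) (f := fun s => 2 * G s) ?_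
      · rwa [uIcc_of_le hlt.le] at this
      · rw [uIcc_of_le hlt.le]
        exact (h2G_cont.mono (fun x hx => hx.1)).integrableOn_Icc
    have hΦcont : ContinuousOn Φ (Icc t0 t1) := by
      simp only [hΦdef]
      exact hψcont.mul (Real.continuous_exp.comp_continuousOn hITcont.neg)
    have hder : ∀ τ ∈ Ioo t0 t1,
        HasDerivAt Φ (2 * G τ * Real.exp (-(IT τ)) * (u τ - ψ τ)) τ := by
      intro τ hτ
      have hnb : Ici t0 ∈ nhds τ := Ici_mem_nhds hτ.1
      have d1 : HasDerivAt ψ (2 * (G τ * u τ)) τ := by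
        simp only [hψdef]
        apply HasDerivAt.const_add
        exact integral_hasDerivAt_right (hint1 τ hτ.1.le)
          ⟨Ici t0, hnb, h2Gu_cont.aestronglyMeasurable measurableSet_Ici⟩
          (h2Gu_cont.continuousAt hnb)
      have d2 : HasDerivAt IT (2 * G τ) τ := by
        simp only [hITdef]
        exact integral_hasDerivAt_right (hint2 τ hτ.1.le)
          ⟨Ici t0, hnb, h2G_cont.aestronglyMeasurable measurableSet_Ici⟩
          (h2G_cont.continuousAt hnb)
      have d3 : HasDerivAt (fun τ => Real.exp (-(IT τ)))
          (Real.exp (-(IT τ)) * (-(2 * G τ))) τ := (d2.neg).exp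
      have d4 := d1.mul d3
      have e : 2 * (G τ * u τ) * Real.exp (-(IT τ)) + ψ τ * (Real.exp (-(IT τ)) * -(2 * G τ))
          = 2 * G τ * Real.exp (-(IT τ)) * (u τ - ψ τ) := by ring
      rw [e] at d4
      exact d4
    have hΦanti : AntitoneOn Φ (Icc t0 t1) := by
      apply antitoneOn_of_deriv_nonpos (convex_Icc t0 t1) hΦcont
      · intro τ hτ
        rw [interior_Icc] at hτ
        exact ((hder τ hτ).differentiableAt).differentiableWithinAt
      · intro τ hτ
        rw [interior_Icc] at hτ
        rw [(hder τ hτ).deriv]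
        apply mul_nonpos_of_nonneg_of_nonpos
        · have := hG_pos τ hτ.1.le
          positivity
        · exact sub_nonpos.2 (huψ τ hτ.1.le hτ.2.le)
    have hfinal1 : Φ t1 ≤ Φ t0 :=
      hΦanti ⟨le_refl t0, hlt.le⟩ ⟨hlt.le, le_refl t1⟩ hlt.le
    have hΦt0 : Φ t0 = 2 := by
      simp [hΦdef, hψdef, hITdef, intervalIntegral.integral_same]
    have hψt1 : ψ t1 ≤ 2 * Real.exp (IT t1) := by
      have h6 : ψ t1 * Real.exp (-(IT t1)) ≤ 2 := by
        rw [← hΦt0]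
        simpa only [hΦdef] using hfinal1
      have h7 := mul_le_mul_of_nonneg_right h6 (Real.exp_pos (IT t1)).le
      rwa [mul_assoc, ← Real.exp_add, neg_add_cancel, Real.exp_zero, mul_one] at h7
    -- ### conclusion
    have hX : 0 ≤ ∫ s in t0..t1, g1 s :=
      integral_nonneg ht1 (fun s hs => (hg1_pos s hs.1).le)
    have hY : 0 ≤ ∫ s in t0..t1, g2 s ^ 2 :=
      integral_nonneg ht1 (fun s hs => (pow_pos (hg2_pos s hs.1) 2).le)
    have hInt1 : IT t1 = 2 * (∫ s in t0..t1, g1 s)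
        + (2 * θ ^ p * K ^ (p-2)) * (∫ s in t0..t1, g2 s ^ 2) := by
      have e : (fun s => 2 * G s)
          = fun s => (2 * g1 s) + (2 * θ ^ p * K ^ (p-2)) * g2 s ^ 2 := by
        funext s; simp only [hGdef]; ring
      have j1 : IntervalIntegrable (fun s => 2 * g1 s) volume t0 t1 := by
        apply ContinuousOn.intervalIntegrable
        rw [uIcc_of_le ht1]
        exact continuousOn_const.mul (hg1_cont.mono (fun x hx => hx.1))
      have j2 : IntervalIntegrable (fun s => (2 * θ ^ p * K ^ (p-2)) * g2 s ^ 2)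
          volume t0 t1 := by
        apply ContinuousOn.intervalIntegrable
        rw [uIcc_of_le ht1]
        exact continuousOn_const.mul ((hg2_cont.mono (fun x hx => hx.1)).pow 2)
      simp only [hITdef]
      rw [e, integral_add j1 j2, intervalIntegral.integral_const_mul, intervalIntegral.integral_const_mul]
    have hIC : IT t1 ≤ C * ((∫ s in t0..t1, g1 s)
        + K ^ (p-2) * (∫ s in t0..t1, g2 s ^ 2)) := by
      have e1 : 2 * (∫ s in t0..t1, g1 s) ≤ C * (∫ s in t0..t1, g1 s) :=
        mul_le_mul_of_nonneg_right hC2 hX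
      have e2 : (2 * θ ^ p * K ^ (p-2)) * (∫ s in t0..t1, g2 s ^ 2)
          ≤ C * (K ^ (p-2) * (∫ s in t0..t1, g2 s ^ 2)) := by
        have h8 := mul_le_mul_of_nonneg_right hCθ
          (mul_nonneg hKp2.le hY)
        calc (2 * θ ^ p * K ^ (p-2)) * (∫ s in t0..t1, g2 s ^ 2)
            = (2 * θ ^ p) * (K ^ (p-2) * (∫ s in t0..t1, g2 s ^ 2)) := by ring
          _ ≤ C * (K ^ (p-2) * (∫ s in t0..t1, g2 s ^ 2)) := h8
      have e3 : C * ((∫ s in t0..t1, g1 s) + K ^ (p-2) * (∫ s in t0..t1, g2 s ^ 2))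
          = C * (∫ s in t0..t1, g1 s) + C * (K ^ (p-2) * (∫ s in t0..t1, g2 s ^ 2)) := by
        ring
      rw [hInt1, e3]
      linarith
    have hexp : Real.exp (IT t1) ≤ Real.exp (C * ((∫ s in t0..t1, g1 s)
        + K ^ (p-2) * (∫ s in t0..t1, g2 s ^ 2))) := Real.exp_le_exp.2 hIC
    have hat1 : 0 < a t1 := ha_pos t1 ht1
    have hft1 : f t1 = u t1 * a t1 := by
      simp only [hudef]
      exact (div_mul_cancel₀ (f t1) (ne_of_gt hat1)).symm
    calc f t1 = u t1 * a t1 := hft1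
      _ ≤ ψ t1 * a t1 :=
          mul_le_mul_of_nonneg_right (huψ t1 ht1 (le_refl _)) hat1.le
      _ ≤ (2 * Real.exp (IT t1)) * a t1 :=
          mul_le_mul_of_nonneg_right hψt1 hat1.le
      _ ≤ (2 * Real.exp (C * ((∫ s in t0..t1, g1 s)
            + K ^ (p-2) * (∫ s in t0..t1, g2 s ^ 2)))) * a t1 := by
          have := mul_le_mul_of_nonneg_left hexp (by norm_num : (0:ℝ) ≤ 2)
          exact mul_le_mul_of_nonneg_right this hat1.le
      _ ≤ (C * Real.exp (C * ((∫ s in t0..t1, g1 s)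
            + K ^ (p-2) * (∫ s in t0..t1, g2 s ^ 2)))) * a t1 := by
          apply mul_le_mul_of_nonneg_right _ hat1.le
          exact mul_le_mul_of_nonneg_right hC2 (Real.exp_pos _).le
      _ = C * a t1 * Real.exp (C * ((∫ s in t0..t1, g1 s)
            + K ^ (p-2) * (∫ s in t0..t1, g2 s ^ 2))) := by ring
end

section
/- There exist $c_0>0$, vectors $\theta_1,\ldots,\theta_6\in\mathbb{Z}^3$, and smooth functions $\Gamma_1,\ldots,\Gamma_6: B\to\mathbb{R}$, where $B$ is the closed ball of radius $c_0$ about the identity in the space of $3\times 3$ real symmetric matrices (with Frobenius norm), such that $M=\sum_{j=1}^6 \Gamma_j(M)^2\,\theta_j\otimes\theta_j$ for all $M\in B$, and moreover $1/100\leq\Gamma_j(M)\leq 1$ for all $M\in B$ and each $j$. -/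
/-- Frobenius distance of a symmetric `3×3` matrix (given as `Fin 3 → Fin 3 → ℝ`)
to the identity. -/
noncomputable def frobDistId (M : Fin 3 → Fin 3 → ℝ) : ℝ :=
  Real.sqrt (∑ i : Fin 3, ∑ k : Fin 3, (M i k - (if i = k then 1 else 0)) ^ 2)

/-- The linear coefficient functions of the Nash decomposition. -/
noncomputable def nashL (j : Fin 6) (M : Fin 3 → Fin 3 → ℝ) : ℝ :=
  match j with
  | 0 => M 2 2 - M 0 0 / 4 - (5 / 12) * M 1 1 - M 1 2 / 3
  | 1 => (M 0 0 - (M 1 1 + 2 * M 1 2) / 3) / 8 + (M 0 2 - M 0 1) / 4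
  | 2 => ((M 1 1 + 2 * M 1 2) / 3 + M 0 1) / 2
  | 3 => ((M 1 1 + 2 * M 1 2) / 3 - M 0 1) / 2
  | 4 => (M 0 0 - (M 1 1 + 2 * M 1 2) / 3) / 8 - (M 0 2 - M 0 1) / 4
  | 5 => (M 1 1 - M 1 2) / 6

/-- The integer vectors of the Nash decomposition. -/
def nashTheta (j : Fin 6) : Fin 3 → ℤ :=
  match j with
  | 0 => ![0, 0, 1]
  | 1 => ![2, 0, 1]
  | 2 => ![1, 1, 1]
  | 3 => ![-1, 1, 1]
  | 4 => ![-2, 0, 1]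
  | 5 => ![0, -2, 1]

lemma nashL_contDiff (j : Fin 6) : ContDiff ℝ (⊤ : ℕ∞) (nashL j) := by
  have hc : ∀ i k : Fin 3, ContDiff ℝ (⊤ : ℕ∞) (fun M : Fin 3 → Fin 3 → ℝ => M i k) := by
    intro i k
    exact (contDiff_apply ℝ ℝ k).comp (contDiff_apply ℝ (Fin 3 → ℝ) i)
  fin_cases j <;> simp only [nashL] <;>
    first
    | exact (((hc 2 2).sub ((hc 0 0).div_const 4)).sub (contDiff_const.mul (hc 1 1))).sub
        ((hc 1 2).div_const 3)
    | exact (((hc 0 0).sub (((hc 1 1).add (contDiff_const.mul (hc 1 2))).div_const 3)).div_const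
        8).add (((hc 0 2).sub (hc 0 1)).div_const 4)
    | exact ((((hc 1 1).add (contDiff_const.mul (hc 1 2))).div_const 3).add (hc 0 1)).div_const 2
    | exact ((((hc 1 1).add (contDiff_const.mul (hc 1 2))).div_const 3).sub (hc 0 1)).div_const 2
    | exact (((hc 0 0).sub (((hc 1 1).add (contDiff_const.mul (hc 1 2))).div_const 3)).div_const
        8).sub (((hc 0 2).sub (hc 0 1)).div_const 4)
    | exact ((hc 1 1).sub (hc 1 2)).div_const 6

lemma entry_bound (M : Fin 3 → Fin 3 → ℝ) (hd : frobDistId M ≤ 1 / 1000) (i k : Fin 3) :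
    |M i k - (if i = k then 1 else 0)| ≤ 1 / 1000 := by
  have hterm : (M i k - (if i = k then 1 else 0)) ^ 2
      ≤ ∑ i : Fin 3, ∑ k : Fin 3, (M i k - (if i = k then 1 else 0)) ^ 2 := by
    calc (M i k - (if i = k then 1 else 0)) ^ 2
        ≤ ∑ k : Fin 3, (M i k - (if i = k then 1 else 0)) ^ 2 :=
          Finset.single_le_sum (f := fun m => (M i m - (if i = m then 1 else 0)) ^ 2)
            (fun n _ => sq_nonneg _) (Finset.mem_univ k)
      _ ≤ _ := Finset.single_le_sum
          (f := fun n => ∑ m : Fin 3, (M n m - (if n = m then 1 else 0)) ^ 2)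
          (fun n _ => Finset.sum_nonneg fun m _ => sq_nonneg _) (Finset.mem_univ i)
  have h1 : Real.sqrt ((M i k - (if i = k then 1 else 0)) ^ 2) ≤ 1 / 1000 :=
    le_trans (Real.sqrt_le_sqrt hterm) hd
  rwa [Real.sqrt_sq_eq_abs] at h1

lemma nashL_bounds (M : Fin 3 → Fin 3 → ℝ) (hd : frobDistId M ≤ 1 / 1000) (j : Fin 6) :
    1 / 10000 ≤ nashL j M ∧ nashL j M ≤ 1 := by
  have h00 := abs_le.mp (entry_bound M hd 0 0)
  have h01 := abs_le.mp (entry_bound M hd 0 1)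
  have h02 := abs_le.mp (entry_bound M hd 0 2)
  have h11 := abs_le.mp (entry_bound M hd 1 1)
  have h12 := abs_le.mp (entry_bound M hd 1 2)
  have h22 := abs_le.mp (entry_bound M hd 2 2)
  simp only [show ((0:Fin 3) = 1) = False by simp, show ((0:Fin 3) = 2) = False by simp,
    show ((1:Fin 3) = 2) = False by simp, if_true, if_false, eq_self_iff_true] at h00 h01 h02 h11 h12 h22
  fin_cases j <;> constructor <;> simp only [nashL] <;> linarith [h00.1, h00.2, h01.1, h01.2, h02.1, h02.2,
        h11.1, h11.2, h12.1, h12.2, h22.1, h22.2]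

/-- Nash decomposition lemma: there exist `c₀ > 0`, integer vectors `θ₁,…,θ₆ ∈ ℤ³`,
and smooth functions `Γ₁,…,Γ₆` on the closed Frobenius ball `B` of radius `c₀`
about the identity in the symmetric `3×3` matrices such that
`M = ∑_j Γ_j(M)² θ_j ⊗ θ_j` and `1/100 ≤ Γ_j(M) ≤ 1` for all `M ∈ B`. -/
theorem stmt3 :
    ∃ c0 : ℝ, 0 < c0 ∧
    ∃ θ : Fin 6 → Fin 3 → ℤ,
    ∃ Γ : Fin 6 → (Fin 3 → Fin 3 → ℝ) → ℝ,
      (∀ j, ContDiffOn ℝ (⊤ : ℕ∞) (Γ j)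
          {M : Fin 3 → Fin 3 → ℝ | (∀ i k, M i k = M k i) ∧ frobDistId M ≤ c0}) ∧
      ∀ M : Fin 3 → Fin 3 → ℝ, (∀ i k, M i k = M k i) → frobDistId M ≤ c0 →
        (∀ i k, M i k = ∑ j : Fin 6, (Γ j M) ^ 2 * (θ j i : ℝ) * (θ j k : ℝ))
        ∧ ∀ j, 1/100 ≤ Γ j M ∧ Γ j M ≤ 1 := by
  refine ⟨1 / 1000, by norm_num, nashTheta,
    fun j M => Real.sqrt (nashL j M), ?_, ?_⟩
  · intro j M hM
    have hpos : 0 < nashL j M := lt_of_lt_of_le (by norm_num) (nashL_bounds M hM.2 j).1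
    exact ((Real.contDiffAt_sqrt (ne_of_gt hpos)).comp M
      (nashL_contDiff j).contDiffAt).contDiffWithinAt
  · intro M hsym hd
    have hb : ∀ j, 1 / 10000 ≤ nashL j M ∧ nashL j M ≤ 1 := nashL_bounds M hd
    have hsq : ∀ j, Real.sqrt (nashL j M) ^ 2 = nashL j M := fun j =>
      Real.sq_sqrt (le_trans (by norm_num) (hb j).1)
    constructor
    · intro i k
      rw [Fin.sum_univ_six]
      simp only [hsq]
      fin_cases i <;> fin_cases k <;>
        simp [nashL, nashTheta] <;>
        linarith [hsym 1 0, hsym 2 0, hsym 2 1]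
    · intro j
      constructor
      · have h := Real.sqrt_le_sqrt (hb j).1
        rwa [show (1 / 10000 : ℝ) = (1 / 100) ^ 2 by norm_num,
          Real.sqrt_sq (by norm_num)] at h
      · have h := Real.sqrt_le_sqrt (hb j).2
        rwa [Real.sqrt_one] at h
end
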